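/- Let Ω ⊂ R^n (n ≥ 2) be a uniformly C^1 domain and p > n. Then there exist constants r_0 > 0 and C such that for all x_0 ∈ Ω and 0 < r ≤ r_0 with d_Ω(x_0) < r: ‖φ‖_{L^∞(Ω_{x_0,r})} ≤ C r^{-n/p} ( ‖φ‖_{L^p(Ω_{x_0,2r})} + r ‖∇φ‖_{L^p(Ω_{x_0,2r})} ) for all φ ∈ W^{1,p}_loc(Ω̄), with C independent of x_0 and r. -/

import Mathlib

open Metric MeasureTheory

noncomputable section

/-- A local graph representation of the boundary: near `x₀`, after a rotation `e`,
`Ω` coincides with the region above the graph of a `C^k` function `h` with `C^k`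
norm at most `K`. -/
def IsCkGraphAt (n k : ℕ) (Ω : Set (EuclideanSpace ℝ (Fin n))) (α β K : ℝ)
    (x₀ : EuclideanSpace ℝ (Fin n)) : Prop :=
  ∃ (e : EuclideanSpace ℝ (Fin n) ≃ₗᵢ[ℝ] WithLp 2 (EuclideanSpace ℝ (Fin (n - 1)) × ℝ))
    (h : EuclideanSpace ℝ (Fin (n - 1)) → ℝ),
    ContDiffOn ℝ (k : ℕ∞) h (ball 0 α) ∧ h 0 = 0 ∧
    fderivWithin ℝ h (ball 0 α) 0 = 0 ∧
    (∀ m : ℕ, m ≤ k → ∀ y' ∈ ball (0 : EuclideanSpace ℝ (Fin (n - 1))) α,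
      ‖iteratedFDerivWithin ℝ m h (ball 0 α) y'‖ ≤ K) ∧
    ∀ (y' : EuclideanSpace ℝ (Fin (n - 1))) (t : ℝ), ‖y'‖ < α → |t| < β →
      (x₀ + e.symm ((WithLp.equiv 2 (EuclideanSpace ℝ (Fin (n - 1)) × ℝ)).symm
        (y', h y' + t)) ∈ Ω ↔ 0 < t)

/-- A bounded domain (open connected bounded set) with `C^k` boundary. -/
def IsBoundedCkDomain (n k : ℕ) (D : Set (EuclideanSpace ℝ (Fin n))) : Prop :=
  IsOpen D ∧ IsConnected D ∧ Bornology.IsBounded D ∧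
  ∀ x₀ ∈ frontier D, ∃ α > (0:ℝ), ∃ β > (0:ℝ), ∃ K : ℝ, IsCkGraphAt n k D α β K x₀

/-- A uniformly `C^k` domain: graph representations with uniform constants `α, β, K`. -/
def IsUniformlyCkDomain (n k : ℕ) (Ω : Set (EuclideanSpace ℝ (Fin n))) : Prop :=
  IsOpen Ω ∧ IsConnected Ω ∧
  ∃ α > (0:ℝ), ∃ β > (0:ℝ), ∃ K : ℝ, ∀ x₀ ∈ frontier Ω, IsCkGraphAt n k Ω α β K x₀

end


set_option maxHeartbeats 1000000
open Metric MeasureTheory Set ENNReal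

section Helpers

variable {n : ℕ}

local notation "E" => EuclideanSpace ℝ (Fin n)

/-- Affine change of variables for lintegrals. -/
lemma lintegral_affine (G : E → ℝ≥0∞) (hG : Measurable G) (c : E) {lam : ℝ} (hlam : 0 < lam) :
    ∫⁻ w, G (c + lam • w) = (ENNReal.ofReal (lam ^ n))⁻¹ * ∫⁻ y, G y := by
  have h1 : Measure.map (fun w : E => lam • w) volume
      = ENNReal.ofReal |(lam ^ Module.finrank ℝ E)⁻¹| • volume :=
    Measure.map_addHaar_smul volume hlam.ne'
  have hmeas : Measurable (fun w : E => c + lam • w) :=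
    (measurable_const_smul lam).const_add c
  have h2 : Measure.map (fun w : E => c + lam • w) volume
      = ENNReal.ofReal |(lam ^ Module.finrank ℝ E)⁻¹| • volume := by
    have : (fun w : E => c + lam • w) = (fun y : E => c + y) ∘ (fun w : E => lam • w) := rfl
    rw [this, ← Measure.map_map (measurable_const_add c) (measurable_const_smul lam), h1]
    simp [Measure.map_smul, map_add_left_eq_self]
  calc ∫⁻ w, G (c + lam • w) = ∫⁻ y, G y ∂(Measure.map (fun w : E => c + lam • w) volume) :=
        (lintegral_map hG hmeas).symm
    _ = ENNReal.ofReal |(lam ^ Module.finrank ℝ E)⁻¹| * ∫⁻ y, G y := by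
        rw [h2]; simp
    _ = (ENNReal.ofReal (lam ^ n))⁻¹ * ∫⁻ y, G y := by
        rw [finrank_euclideanSpace_fin, abs_of_nonneg (by positivity),
          ENNReal.ofReal_inv_of_pos (by positivity)]

lemma image_affine_ball (c : E) {lam : ℝ} (hlam : 0 < lam) (z : E) {ρ : ℝ} :
    (fun w : E => c + lam • w) '' ball z ρ = ball (c + lam • z) (lam * ρ) := by
  ext w
  constructor
  · rintro ⟨v, hv, rfl⟩
    rw [mem_ball, dist_eq_norm] at hv ⊢
    have : c + lam • v - (c + lam • z) = lam • (v - z) := by module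
    rw [this, norm_smul, Real.norm_eq_abs, abs_of_pos hlam]
    exact (mul_lt_mul_iff_right₀ hlam).2 hv
  · intro hw
    refine ⟨lam⁻¹ • (w - c), ?_, by show c + lam • lam⁻¹ • (w - c) = w; rw [smul_smul, mul_inv_cancel₀ hlam.ne', one_smul]; abel⟩
    rw [mem_ball, dist_eq_norm] at hw ⊢
    have : lam⁻¹ • (w - c) - z = lam⁻¹ • (w - (c + lam • z)) := by
      rw [smul_sub, smul_sub, smul_add, smul_smul, inv_mul_cancel₀ hlam.ne', one_smul]; abel
    rw [this, norm_smul, Real.norm_eq_abs, abs_of_pos (by positivity)]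
    rw [inv_mul_lt_iff₀ hlam]
    exact hw

lemma lintegral_affine_ball (G : E → ℝ≥0∞) (hG : Measurable G) (c : E) {lam : ℝ}
    (hlam : 0 < lam) (z : E) {ρ : ℝ} :
    ∫⁻ w in ball z ρ, G (c + lam • w)
      = (ENNReal.ofReal (lam ^ n))⁻¹ * ∫⁻ y in ball (c + lam • z) (lam * ρ), G y := by
  have hinj : Function.Injective (fun w : E => c + lam • w) := fun a b hab => by
    have : lam • a = lam • b := by simpa using hab
    exact smul_right_injective _ hlam.ne' this
  have key : ∀ w : E, (ball z ρ).indicator (fun w => G (c + lam • w)) w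
      = (ball (c + lam • z) (lam * ρ)).indicator G (c + lam • w) := by
    intro w
    rw [← image_affine_ball c hlam z]
    by_cases hw : w ∈ ball z ρ
    · rw [indicator_of_mem hw, indicator_of_mem (mem_image_of_mem _ hw)]
    · rw [indicator_of_notMem hw, indicator_of_notMem]
      intro hc
      exact hw ((hinj.mem_set_image).1 hc)
  rw [← lintegral_indicator measurableSet_ball, ← lintegral_indicator measurableSet_ball]
  calc ∫⁻ w, (ball z ρ).indicator (fun w => G (c + lam • w)) w
      = ∫⁻ w, (ball (c + lam • z) (lam * ρ)).indicator G (c + lam • w) := by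
        simp_rw [key]
    _ = (ENNReal.ofReal (lam ^ n))⁻¹ * ∫⁻ y, (ball (c + lam • z) (lam * ρ)).indicator G y :=
        lintegral_affine _ (hG.indicator measurableSet_ball) c hlam

/-- Hölder against the constant 1 on a set. -/
lemma lintegral_le_rpow_mul_rpow {α : Type*} [MeasurableSpace α] (μ : Measure α)
    {p q : ℝ} (hpq : Real.HolderConjugate p q) (G : α → ℝ≥0∞) (hG : AEMeasurable G μ) :
    ∫⁻ y, G y ∂μ ≤ (∫⁻ y, G y ^ p ∂μ) ^ (1/p) * (μ univ) ^ (1/q) := by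
  have := ENNReal.lintegral_mul_le_Lp_mul_Lq μ hpq hG aemeasurable_const (g := fun _ => 1)
  simpa using this

/-- The λ-integral `∫₀¹ λ^{-n/p} dλ = p/(p-n)`. -/
lemma lintegral_rpow_Ioc {n : ℕ} {p : ℝ} (hnp : (n : ℝ) < p) (hp : 0 < p) :
    ∫⁻ lam in Set.Ioc (0:ℝ) 1, ENNReal.ofReal (lam ^ (-((n:ℝ)/p)))
      = ENNReal.ofReal (p / (p - (n:ℝ))) := by
  have hexp : (-1:ℝ) < -((n:ℝ)/p) := by
    rw [neg_lt_neg_iff, div_lt_one hp]; exact hnp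
  have hInt : IntervalIntegrable (fun lam : ℝ => lam ^ (-((n:ℝ)/p))) volume 0 1 :=
    intervalIntegral.intervalIntegrable_rpow' hexp
  have hInt' : IntegrableOn (fun lam : ℝ => lam ^ (-((n:ℝ)/p))) (Set.Ioc (0:ℝ) 1) volume :=
    (intervalIntegrable_iff_integrableOn_Ioc_of_le (by norm_num)).1 hInt
  rw [← ofReal_integral_eq_lintegral_ofReal hInt']
  · congr 1
    have h1 : (∫ lam in Set.Ioc (0:ℝ) 1, lam ^ (-((n:ℝ)/p)))
        = ∫ lam in (0:ℝ)..1, lam ^ (-((n:ℝ)/p)) := by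
      rw [intervalIntegral.integral_of_le (by norm_num)]
    rw [h1, integral_rpow (Or.inl hexp)]
    have hpn : (0:ℝ) < p - n := by linarith
    have h2 : -((n:ℝ)/p) + 1 = (p - n)/p := by field_simp; ring
    rw [h2, Real.one_rpow, Real.zero_rpow (by positivity : ((p - (n:ℝ))/p) ≠ 0)]
    rw [sub_zero, one_div_div]
  · filter_upwards [ae_restrict_mem measurableSet_Ioc] with lam hlam
    exact Real.rpow_nonneg hlam.1.le _


lemma map_affine (c : E) {lam : ℝ} (hlam : 0 < lam) :
    Measure.map (fun w : E => c + lam • w) volume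
      = ENNReal.ofReal |(lam ^ Module.finrank ℝ E)⁻¹| • volume := by
  have h1 : Measure.map (fun w : E => lam • w) volume
      = ENNReal.ofReal |(lam ^ Module.finrank ℝ E)⁻¹| • volume :=
    Measure.map_addHaar_smul volume hlam.ne'
  have : (fun w : E => c + lam • w) = (fun y : E => c + y) ∘ (fun w : E => lam • w) := rfl
  rw [this, ← Measure.map_map (measurable_const_add c) (measurable_const_smul lam), h1]
  simp [Measure.map_smul, map_add_left_eq_self]

theorem core_bound (hn : 2 ≤ n) {p q : ℝ} (hpq : Real.HolderConjugate p q)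
    (hnp : (n : ℝ) < p)
    {S A : Set E} (hS : IsOpen S) (hA : MeasurableSet A) (hAfin : volume A ≠ ⊤)
    {f : E → ℝ} {f' : E → (E →L[ℝ] ℝ)}
    (hder : ∀ y ∈ S, HasFDerivAt f (f' y) y)
    (hMf : MemLp f (ENNReal.ofReal p) (volume.restrict A))
    (hMg : MemLp f' (ENNReal.ofReal p) (volume.restrict A))
    {x z : E} {ρ R : ℝ} (hρ : 0 < ρ) (hzR : ‖z - x‖ + ρ ≤ R)
    (hx : x ∈ S)
    (hcone : ∀ lam ∈ Set.Ioc (0:ℝ) 1, ∀ w ∈ ball z ρ, x + lam • (w - x) ∈ S ∩ A) :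
    |f x| ≤ ((volume (ball z ρ)).toReal)⁻¹ *
      ((eLpNorm f (ENNReal.ofReal p) (volume.restrict A)).toReal
          * ((volume (ball z ρ)).toReal) ^ (1/q)
        + R * ((p/(p-(n:ℝ))) * (eLpNorm f' (ENNReal.ofReal p) (volume.restrict A)).toReal
          * (R^n * (volume (ball (0:E) 1)).toReal) ^ (1/q))) := by
  have hp1 : 1 < p := hpq.lt
  have hp0 : 0 < p := by linarith
  have hq0 : 0 < q := hpq.symm.pos
  set P : ℝ≥0∞ := ENNReal.ofReal p with hP
  have hPtop : P ≠ ⊤ := ofReal_ne_top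
  have hP0 : P ≠ 0 := by simp only [hP, ne_eq, ENNReal.ofReal_eq_zero, not_le]; linarith
  have hPr : P.toReal = p := toReal_ofReal hp0.le
  set ν := volume.restrict A with hν
  haveI : IsFiniteMeasure ν := ⟨by rw [hν, Measure.restrict_apply_univ]; exact hAfin.lt_top⟩
  set gm := hMg.aestronglyMeasurable.mk f' with hgm
  have hgm_meas : StronglyMeasurable gm := hMg.aestronglyMeasurable.stronglyMeasurable_mk
  have hgm_ae : f' =ᵐ[ν] gm := hMg.aestronglyMeasurable.ae_eq_mk
  set F : E → ℝ≥0∞ := A.indicator (fun y => (‖gm y‖₊ : ℝ≥0∞)) with hFdef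
  have hF : Measurable F := (hgm_meas.measurable.nnnorm.coe_nnreal_ennreal).indicator hA
  have hFp : ∫⁻ y, F y ^ p = ∫⁻ y, (‖f' y‖₊ : ℝ≥0∞) ^ p ∂ν := by
    have h1 : ∀ y, F y ^ p = A.indicator (fun y => (‖gm y‖₊ : ℝ≥0∞) ^ p) y := by
      intro y
      by_cases hy : y ∈ A
      · rw [hFdef]; simp only [indicator_of_mem hy]
      · rw [hFdef]; simp only [indicator_of_notMem hy]
        exact ENNReal.zero_rpow_of_pos hp0
    simp_rw [h1]
    rw [lintegral_indicator hA]
    refine lintegral_congr_ae ?_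
    filter_upwards [hgm_ae] with y hy
    rw [hy]
  set NG := (∫⁻ y, (‖f' y‖₊ : ℝ≥0∞) ^ p ∂ν) ^ (1/p) with hNGdef
  have hNG_eq : NG = eLpNorm f' P ν := by
    rw [eLpNorm_eq_lintegral_rpow_enorm_toReal hP0 hPtop, hPr]; rfl
  have hNG_top : NG ≠ ⊤ := by rw [hNG_eq]; exact hMg.eLpNorm_ne_top
  set Vb := volume (ball (0:E) 1) with hVbdef
  have hVb_top : Vb ≠ ⊤ := measure_ball_lt_top.ne
  have hVb0 : Vb ≠ 0 := (measure_ball_pos _ _ one_pos).ne'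
  set CB := (ENNReal.ofReal (R^n) * Vb) ^ (1/q) with hCBdef
  have hCB_top : CB ≠ ⊤ :=
    ENNReal.rpow_ne_top_of_nonneg (by positivity) (ENNReal.mul_ne_top ofReal_ne_top hVb_top)
  have hR0 : 0 < R := lt_of_lt_of_le (by positivity) hzR
  set H : ℝ × E → ℝ≥0∞ := fun pr => F (x + pr.1 • (pr.2 - x)) with hHdef
  have hH : Measurable H := by
    apply hF.comp
    fun_prop
  -- Step 1: per-λ bound
  have step1 : ∀ lam ∈ Set.Ioc (0:ℝ) 1,
      ∫⁻ w in ball z ρ, F (x + lam • (w - x)) ≤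
        ENNReal.ofReal (lam ^ (-((n:ℝ)/p))) * (NG * CB) := by
    intro lam hlam
    have hl0 : 0 < lam := hlam.1
    have hrw : ∀ w : E, x + lam • (w - x) = (x - lam • x) + lam • w := by
      intro w; rw [smul_sub]; abel
    have hsub : ball ((x - lam • x) + lam • z) (lam * ρ) ⊆ closedBall x (lam * R) := by
      intro y hy
      rw [mem_ball, dist_eq_norm] at hy
      rw [mem_closedBall, dist_eq_norm]
      have hc : (x - lam • x) + lam • z - x = lam • (z - x) := by rw [smul_sub]; abel
      calc ‖y - x‖ ≤ ‖y - ((x - lam • x) + lam • z)‖ + ‖(x - lam • x) + lam • z - x‖ :=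
            norm_sub_le_norm_sub_add_norm_sub _ _ _
        _ ≤ lam * ρ + lam * ‖z - x‖ := by
            rw [hc, norm_smul, Real.norm_eq_abs, abs_of_pos hl0]
            exact add_le_add hy.le le_rfl
        _ ≤ lam * R := by nlinarith [norm_nonneg (z - x)]
    have hvol : volume (closedBall x (lam * R)) = ENNReal.ofReal ((lam * R)^n) * Vb := by
      rw [Measure.addHaar_closedBall volume x (by positivity), finrank_euclideanSpace_fin]
    calc ∫⁻ w in ball z ρ, F (x + lam • (w - x))
        = ∫⁻ w in ball z ρ, F ((x - lam • x) + lam • w) := by simp_rw [hrw]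
      _ = (ENNReal.ofReal (lam ^ n))⁻¹ *
            ∫⁻ y in ball ((x - lam • x) + lam • z) (lam * ρ), F y :=
          lintegral_affine_ball F hF _ hl0 z
      _ ≤ (ENNReal.ofReal (lam ^ n))⁻¹ * ∫⁻ y in closedBall x (lam * R), F y := by
          gcongr
      _ ≤ (ENNReal.ofReal (lam ^ n))⁻¹ *
            ((∫⁻ y in closedBall x (lam * R), F y ^ p) ^ (1/p)
              * (volume (closedBall x (lam * R))) ^ (1/q)) := by
          gcongr
          have := lintegral_le_rpow_mul_rpow (volume.restrict (closedBall x (lam * R))) hpq F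
            hF.aemeasurable
          rwa [Measure.restrict_apply_univ] at this
      _ ≤ (ENNReal.ofReal (lam ^ n))⁻¹ * (NG * (ENNReal.ofReal ((lam * R)^n) * Vb) ^ (1/q)) := by
          rw [hvol]
          gcongr
          rw [hNGdef, ← hFp]
          exact ENNReal.rpow_le_rpow (setLIntegral_le_lintegral _ _) (by positivity)
      _ = ENNReal.ofReal (lam ^ (-((n:ℝ)/p))) * (NG * CB) := by
          rw [mul_pow, ENNReal.ofReal_mul (by positivity), ENNReal.mul_rpow_of_nonneg _ _ (by positivity),
            ENNReal.mul_rpow_of_nonneg _ _ (by positivity)]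
          have hco : (ENNReal.ofReal (lam ^ n))⁻¹ * ENNReal.ofReal (lam ^ n) ^ (1/q)
              = ENNReal.ofReal (lam ^ (-((n:ℝ)/p))) := by
            have hl : (0:ℝ) < lam ^ n := by positivity
            rw [ENNReal.ofReal_rpow_of_pos hl, ← ENNReal.ofReal_inv_of_pos hl,
              ← Real.rpow_natCast lam n, ← Real.rpow_mul hl0.le,
              ← Real.rpow_neg hl0.le, ← ENNReal.ofReal_mul (by positivity)]
            congr 1
            rw [← Real.rpow_add hl0]
            congr 1
            have h1q : 1/q = 1 - 1/p := by
              have := hpq.inv_add_inv_eq_one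
              rw [one_div, one_div]; linarith [hpq.inv_add_inv_eq_one]
            rw [h1q]
            field_simp
            ring
          rw [hCBdef, ENNReal.mul_rpow_of_nonneg _ _ (by positivity), ← hco]
          ring
  -- Step 2: the double integral
  set Itot := ∫⁻ lam in Set.Ioc (0:ℝ) 1, ∫⁻ w in ball z ρ, H (lam, w) with hItotdef
  have step2 : Itot ≤ ENNReal.ofReal (p / (p - (n:ℝ))) * (NG * CB) := by
    rw [hItotdef]
    calc ∫⁻ lam in Set.Ioc (0:ℝ) 1, ∫⁻ w in ball z ρ, H (lam, w)
        ≤ ∫⁻ lam in Set.Ioc (0:ℝ) 1, ENNReal.ofReal (lam ^ (-((n:ℝ)/p))) * (NG * CB) := by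
          apply lintegral_mono_ae
          filter_upwards [ae_restrict_mem measurableSet_Ioc] with lam hlam
          exact step1 lam hlam
      _ = (∫⁻ lam in Set.Ioc (0:ℝ) 1, ENNReal.ofReal (lam ^ (-((n:ℝ)/p)))) * (NG * CB) := by
          rw [lintegral_mul_const' _ _ (ENNReal.mul_ne_top hNG_top hCB_top)]
      _ = ENNReal.ofReal (p / (p - (n:ℝ))) * (NG * CB) := by
          rw [lintegral_rpow_Ioc hnp hp0]
  have hItot_top : Itot ≠ ⊤ :=
    (lt_of_le_of_lt step2 (by
      exact ENNReal.mul_lt_top ofReal_lt_top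
        (ENNReal.mul_lt_top hNG_top.lt_top hCB_top.lt_top))).ne
  -- Step 3: swap
  have hswap : ∫⁻ w in ball z ρ, ∫⁻ lam in Set.Ioc (0:ℝ) 1, H (lam, w) = Itot := by
    rw [hItotdef]
    exact lintegral_lintegral_swap ((hH.comp measurable_swap).aemeasurable)
  -- Step 4: a.e. w, the bad λ-set is null
  have step4 : ∀ᵐ w ∂(volume.restrict (ball z ρ)),
      ∀ᵐ lam ∂(volume.restrict (Set.Ioc (0:ℝ) 1)),
        (x + lam • (w - x) ∈ A → f' (x + lam • (w - x)) = gm (x + lam • (w - x))) := by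
    have hNnull : ν {y | f' y ≠ gm y} = 0 := by
      rw [← ae_iff] at *
      exact hgm_ae
    obtain ⟨N', hNsub, hN'meas, hN'null⟩ := exists_measurable_superset_of_null hNnull
    have hN2null : volume (N' ∩ A) = 0 := by
      rw [hν, Measure.restrict_apply hN'meas] at hN'null
      exact hN'null
    have hN2meas : MeasurableSet (N' ∩ A) := hN'meas.inter hA
    -- per-λ the preimage is null
    have perlam : ∀ lam ∈ Set.Ioc (0:ℝ) 1,
        volume {w : E | x + lam • (w - x) ∈ N' ∩ A} = 0 := by
      intro lam hlam
      have hl0 : 0 < lam := hlam.1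
      have hrw2 : ∀ w : E, x + lam • (w - x) = (x - lam • x) + lam • w := by
        intro w; rw [smul_sub]; abel
      have hset : {w : E | x + lam • (w - x) ∈ N' ∩ A}
          = (fun w : E => (x - lam • x) + lam • w) ⁻¹' (N' ∩ A) := by
        ext w
        rw [mem_setOf_eq, mem_preimage, hrw2]
      rw [hset, ← Measure.map_apply ((measurable_const_smul lam).const_add _) hN2meas,
        map_affine _ hl0, Measure.smul_apply, hN2null]
      simp
    -- product set is null
    set Pset : Set (E × ℝ) := {pr | x + pr.2 • (pr.1 - x) ∈ N' ∩ A} with hPsetdef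
    have hPmeas : MeasurableSet Pset := by
      have hcont : Continuous (fun pr : E × ℝ => x + pr.2 • (pr.1 - x)) := by fun_prop
      exact hcont.measurable hN2meas
    have hPnull : ((volume.restrict (ball z ρ)).prod
        (volume.restrict (Set.Ioc (0:ℝ) 1))) Pset = 0 := by
      rw [Measure.prod_apply_symm hPmeas]
      have : ∀ᵐ lam ∂(volume.restrict (Set.Ioc (0:ℝ) 1)),
          (volume.restrict (ball z ρ)) ((fun w => (w, lam)) ⁻¹' Pset) = 0 := by
        filter_upwards [ae_restrict_mem measurableSet_Ioc] with lam hlam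
        refine le_antisymm ?_ zero_le
        calc (volume.restrict (ball z ρ)) ((fun w => (w, lam)) ⁻¹' Pset)
            ≤ volume ((fun w => (w, lam)) ⁻¹' Pset) := Measure.restrict_le_self _
          _ = 0 := perlam lam hlam
      rw [lintegral_congr_ae this]
      simp
    have := ((Measure.measure_prod_null hPmeas).1 hPnull)
    filter_upwards [this] with w hw
    have hw' : (volume.restrict (Set.Ioc (0:ℝ) 1)) {lam | x + lam • (w - x) ∈ N' ∩ A} = 0 := hw
    have : ∀ᵐ lam ∂(volume.restrict (Set.Ioc (0:ℝ) 1)),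
        x + lam • (w - x) ∉ N' ∩ A := by
      rw [ae_iff]
      simpa using hw'
    filter_upwards [this] with lam hlam hmem
    by_contra hne
    exact hlam ⟨hNsub hne, hmem⟩
  -- Step 5: pointwise bound a.e.
  have hJmeas : Measurable (fun w : E => ∫⁻ lam in Set.Ioc (0:ℝ) 1, H (lam, w)) :=
    Measurable.lintegral_prod_right' (ν := volume.restrict (Set.Ioc (0:ℝ) 1))
      (f := fun pr : E × ℝ => H (pr.2, pr.1)) (hH.comp measurable_swap)
  have step5 : ∀ᵐ w ∂(volume.restrict (ball z ρ)),
      |f x| ≤ |f w| + R * (∫⁻ lam in Set.Ioc (0:ℝ) 1, H (lam, w)).toReal := by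
    have hw2ae : ∀ᵐ w ∂(volume.restrict (ball z ρ)),
        (∫⁻ lam in Set.Ioc (0:ℝ) 1, H (lam, w)) < ⊤ := by
      apply ae_lt_top hJmeas
      rw [hswap]; exact hItot_top
    filter_upwards [hw2ae, step4, ae_restrict_mem measurableSet_ball] with w hw2 hw4 hwball
    set γ : ℝ → E := fun lam => x + lam • (w - x) with hγ
    have hγ1 : γ 1 = w := by simp [hγ]
    have hγ0 : γ 0 = x := by simp [hγ]
    have hγA : ∀ lam ∈ Set.Ioc (0:ℝ) 1, γ lam ∈ S ∩ A := fun lam hlam => hcone lam hlam w hwball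
    have hae_lam : ∀ᵐ lam ∂(volume.restrict (Set.Ioc (0:ℝ) 1)),
        f' (γ lam) = gm (γ lam) ∧ H (lam, w) = (‖gm (γ lam)‖₊ : ℝ≥0∞) := by
      filter_upwards [hw4, ae_restrict_mem measurableSet_Ioc] with lam h4 hmem
      have hA' : γ lam ∈ A := (hγA lam hmem).2
      have heq : f' (γ lam) = gm (γ lam) := h4 hA'
      refine ⟨heq, ?_⟩
      have hHF : H (lam, w) = A.indicator (fun y => (‖gm y‖₊ : ℝ≥0∞)) (γ lam) := rfl
      rw [hHF, indicator_of_mem hA']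
    have hhas : ∀ lam ∈ Set.uIcc (0:ℝ) 1,
        HasDerivAt (fun t => f (γ t)) ((f' (γ lam)) (w - x)) lam := by
      intro lam hlam
      rw [Set.uIcc_of_le (zero_le_one)] at hlam
      have hmemS : γ lam ∈ S := by
        rcases eq_or_lt_of_le hlam.1 with h0 | h0
        · rw [← h0, hγ0]; exact hx
        · exact (hγA lam ⟨h0, hlam.2⟩).1
      have hd1 : HasDerivAt γ (w - x) lam := by
        have h1 : HasDerivAt (fun t : ℝ => t • (w - x)) ((1:ℝ) • (w - x)) lam :=
          (hasDerivAt_id lam).smul_const (w - x)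
        rw [one_smul] at h1
        exact h1.const_add x
      exact (hder _ hmemS).comp_hasDerivAt lam hd1
    have hwxR : ‖w - x‖ ≤ R := by
      have h1 : ‖w - x‖ ≤ ‖w - z‖ + ‖z - x‖ := norm_sub_le_norm_sub_add_norm_sub _ _ _
      have hwz : ‖w - z‖ < ρ := by rw [mem_ball, dist_eq_norm] at hwball; exact hwball
      linarith
    have hmeas_g : AEStronglyMeasurable (fun lam => (f' (γ lam)) (w - x))
        (volume.restrict (Set.Ioc (0:ℝ) 1)) := by
      have h1 : StronglyMeasurable (fun lam : ℝ => gm (γ lam)) :=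
        hgm_meas.comp_measurable (by fun_prop)
      have hsm : StronglyMeasurable (fun lam : ℝ => (gm (γ lam)) (w - x)) :=
        (ContinuousLinearMap.apply ℝ ℝ (w - x)).continuous.comp_stronglyMeasurable h1
      apply hsm.aestronglyMeasurable.congr
      filter_upwards [hae_lam] with lam hl
      rw [hl.1]
    have hbound : ∀ᵐ lam ∂(volume.restrict (Set.Ioc (0:ℝ) 1)),
        ENNReal.ofReal ‖(f' (γ lam)) (w - x)‖ ≤ ENNReal.ofReal R * H (lam, w) := by
      filter_upwards [hae_lam] with lam hl
      rw [hl.1, hl.2]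
      calc ENNReal.ofReal ‖(gm (γ lam)) (w - x)‖ ≤ ENNReal.ofReal (R * ‖gm (γ lam)‖) := by
            apply ENNReal.ofReal_le_ofReal
            calc ‖(gm (γ lam)) (w - x)‖ ≤ ‖gm (γ lam)‖ * ‖w - x‖ :=
                  (gm (γ lam)).le_opNorm _
              _ ≤ R * ‖gm (γ lam)‖ := by nlinarith [norm_nonneg (gm (γ lam)), norm_nonneg (w - x)]
        _ = ENNReal.ofReal R * ENNReal.ofReal ‖gm (γ lam)‖ := ENNReal.ofReal_mul hR0.le
        _ = ENNReal.ofReal R * (‖gm (γ lam)‖₊ : ℝ≥0∞) := by rw [← ofReal_coe_nnreal, coe_nnnorm]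
    have hlin : ∫⁻ lam in Set.Ioc (0:ℝ) 1, ENNReal.ofReal ‖(f' (γ lam)) (w - x)‖
        ≤ ENNReal.ofReal R * ∫⁻ lam in Set.Ioc (0:ℝ) 1, H (lam, w) := by
      calc ∫⁻ lam in Set.Ioc (0:ℝ) 1, ENNReal.ofReal ‖(f' (γ lam)) (w - x)‖
          ≤ ∫⁻ lam in Set.Ioc (0:ℝ) 1, ENNReal.ofReal R * H (lam, w) := lintegral_mono_ae hbound
        _ = ENNReal.ofReal R * ∫⁻ lam in Set.Ioc (0:ℝ) 1, H (lam, w) :=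
            lintegral_const_mul' _ _ ofReal_ne_top
    have hInt : IntervalIntegrable (fun lam => (f' (γ lam)) (w - x)) volume 0 1 := by
      rw [intervalIntegrable_iff_integrableOn_Ioc_of_le (zero_le_one)]
      refine ⟨hmeas_g, ?_⟩
      rw [hasFiniteIntegral_iff_norm]
      exact lt_of_le_of_lt hlin (ENNReal.mul_lt_top ofReal_lt_top hw2)
    have hFTC := intervalIntegral.integral_eq_sub_of_hasDerivAt hhas hInt
    rw [hγ1, hγ0] at hFTC
    have hfx : f x = f w - ∫ lam in (0:ℝ)..1, (f' (γ lam)) (w - x) := by rw [hFTC]; ring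
    rw [hfx]
    have habs : |f w - ∫ lam in (0:ℝ)..1, (f' (γ lam)) (w - x)|
        ≤ |f w| + |∫ lam in (0:ℝ)..1, (f' (γ lam)) (w - x)| := by
      rw [sub_eq_add_neg]
      refine (abs_add_le _ _).trans ?_
      rw [abs_neg]
    refine le_trans habs (add_le_add le_rfl ?_)
    rw [intervalIntegral.integral_of_le zero_le_one]
    calc |∫ lam in Set.Ioc (0:ℝ) 1, (f' (γ lam)) (w - x)|
        ≤ (∫⁻ lam in Set.Ioc (0:ℝ) 1, ENNReal.ofReal ‖(f' (γ lam)) (w - x)‖).toReal := by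
          rw [← Real.norm_eq_abs]
          exact norm_integral_le_lintegral_norm _
      _ ≤ (ENNReal.ofReal R * ∫⁻ lam in Set.Ioc (0:ℝ) 1, H (lam, w)).toReal :=
          ENNReal.toReal_mono (ENNReal.mul_ne_top ofReal_ne_top hw2.ne) hlin
      _ = R * (∫⁻ lam in Set.Ioc (0:ℝ) 1, H (lam, w)).toReal := by
          rw [ENNReal.toReal_mul, ENNReal.toReal_ofReal hR0.le]
  -- Step 6: averaging
  set B := ball z ρ with hB
  have hμB0 : volume B ≠ 0 := (measure_ball_pos _ _ hρ).ne'
  have hμBtop : volume B ≠ ⊤ := measure_ball_lt_top.ne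
  haveI : IsFiniteMeasure (volume.restrict B) :=
    ⟨by rw [Measure.restrict_apply_univ]; exact hμBtop.lt_top⟩
  have hBsubA : B ⊆ A := by
    intro w hw
    have := (hcone 1 ⟨one_pos, le_refl 1⟩ w hw).2
    simpa using this
  have hrr : ν.restrict B = volume.restrict B := by
    rw [hν, Measure.restrict_restrict measurableSet_ball, inter_eq_self_of_subset_left hBsubA]
  have hf_int : IntegrableOn f B volume := by
    have h1 : Integrable f ν := hMf.integrable (by rw [hP]; exact ENNReal.one_le_ofReal.2 hp1.le)
    have h2 := h1.restrict (s := B)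
    rwa [hrr] at h2
  have hw2ae : ∀ᵐ w ∂(volume.restrict B), (∫⁻ lam in Set.Ioc (0:ℝ) 1, H (lam, w)) < ⊤ := by
    apply ae_lt_top hJmeas
    rw [hswap]; exact hItot_top
  have hJ_int : IntegrableOn (fun w => (∫⁻ lam in Set.Ioc (0:ℝ) 1, H (lam, w)).toReal) B volume := by
    apply integrable_toReal_of_lintegral_ne_top hJmeas.aemeasurable
    rw [hswap]; exact hItot_top
  have havg : (volume B).toReal * |f x| ≤
      ∫ w in B, (|f w| + R * (∫⁻ lam in Set.Ioc (0:ℝ) 1, H (lam, w)).toReal) := by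
    have h1 : (volume B).toReal * |f x| = ∫ _ in B, |f x| := by
      rw [setIntegral_const, smul_eq_mul]; rfl
    rw [h1]
    apply integral_mono_ae (integrable_const _) (hf_int.abs.add (hJ_int.const_mul R))
    filter_upwards [step5] with w hw
    exact hw
  have hterm1 : ∫ w in B, |f w| ≤ (eLpNorm f P ν).toReal * ((volume B).toReal) ^ (1/q) := by
    have hfae : AEStronglyMeasurable f (volume.restrict B) := by
      have := hMf.aestronglyMeasurable.restrict (s := B)
      rwa [hrr] at this
    have h0 : ∫ w in B, |f w| = (∫⁻ w in B, (‖f w‖₊ : ℝ≥0∞)).toReal := by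
      simp_rw [← Real.norm_eq_abs]
      rw [integral_norm_eq_lintegral_enorm hfae]; rfl
    rw [h0]
    have h1 : ∫⁻ w in B, (‖f w‖₊ : ℝ≥0∞)
        ≤ (∫⁻ w in B, (‖f w‖₊ : ℝ≥0∞) ^ p) ^ (1/p) * (volume B) ^ (1/q) := by
      have := lintegral_le_rpow_mul_rpow (volume.restrict B) hpq
        (fun w => (‖f w‖₊ : ℝ≥0∞)) hfae.enorm
      rwa [Measure.restrict_apply_univ] at this
    have h2 : (∫⁻ w in B, (‖f w‖₊:ℝ≥0∞) ^ p) ^ (1/p) ≤ eLpNorm f P ν := by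
      rw [eLpNorm_eq_lintegral_rpow_enorm_toReal hP0 hPtop, hPr]
      refine ENNReal.rpow_le_rpow ?_ (by positivity)
      refine lintegral_mono' ?_ le_rfl
      rw [← hrr]
      exact Measure.restrict_le_self
    calc (∫⁻ w in B, (‖f w‖₊:ℝ≥0∞)).toReal
        ≤ ((eLpNorm f P ν) * (volume B)^(1/q)).toReal :=
          ENNReal.toReal_mono
            (ENNReal.mul_ne_top hMf.eLpNorm_ne_top
              (ENNReal.rpow_ne_top_of_nonneg (by positivity) hμBtop))
            (le_trans h1 (mul_le_mul_left h2 _))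
      _ = (eLpNorm f P ν).toReal * ((volume B).toReal) ^ (1/q) := by
          rw [ENNReal.toReal_mul, ← ENNReal.toReal_rpow]
  have hterm2 : ∫ w in B, (∫⁻ lam in Set.Ioc (0:ℝ) 1, H (lam, w)).toReal
      ≤ (p/(p-(n:ℝ))) * (eLpNorm f' P ν).toReal
        * (R^n * (volume (ball (0:E) 1)).toReal) ^ (1/q) := by
    have hpn : (0:ℝ) < p - n := by linarith
    have h0 : ∫ w in B, (∫⁻ lam in Set.Ioc (0:ℝ) 1, H (lam, w)).toReal = Itot.toReal := by
      rw [integral_toReal hJmeas.aemeasurable hw2ae, hswap]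
    rw [h0]
    have hfin : ENNReal.ofReal (p/(p-(n:ℝ))) * (NG * CB) ≠ ⊤ :=
      ENNReal.mul_ne_top ofReal_ne_top (ENNReal.mul_ne_top hNG_top hCB_top)
    have h1 : Itot.toReal ≤ (ENNReal.ofReal (p/(p-(n:ℝ))) * (NG * CB)).toReal :=
      ENNReal.toReal_mono hfin step2
    refine le_trans h1 (le_of_eq ?_)
    rw [ENNReal.toReal_mul, ENNReal.toReal_mul, ENNReal.toReal_ofReal (by positivity),
      hNG_eq, hCBdef, ← ENNReal.toReal_rpow, ENNReal.toReal_mul,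
      ENNReal.toReal_ofReal (by positivity), hVbdef]
    ring
  have final : (volume B).toReal * |f x| ≤
      (eLpNorm f P ν).toReal * ((volume B).toReal)^(1/q)
        + R * ((p/(p-(n:ℝ))) * (eLpNorm f' P ν).toReal
          * (R^n * (volume (ball (0:E) 1)).toReal)^(1/q)) := by
    refine le_trans havg ?_
    rw [integral_add hf_int.abs (hJ_int.const_mul R), MeasureTheory.integral_const_mul]
    exact add_le_add hterm1 (mul_le_mul_of_nonneg_left hterm2 hR0.le)
  have hpos : 0 < (volume B).toReal := ENNReal.toReal_pos hμB0 hμBtop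
  calc |f x| = ((volume B).toReal)⁻¹ * ((volume B).toReal * |f x|) := by
        field_simp
    _ ≤ ((volume B).toReal)⁻¹ *
        ((eLpNorm f P ν).toReal * ((volume B).toReal)^(1/q)
          + R * ((p/(p-(n:ℝ))) * (eLpNorm f' P ν).toReal
            * (R^n * (volume (ball (0:E) 1)).toReal)^(1/q))) :=
        mul_le_mul_of_nonneg_left final (by positivity)


local notation "E'" => EuclideanSpace ℝ (Fin (n-1))

lemma ball_part {x₀ x z w : E} {r ρ lam : ℝ} (hr : 0 < r) (hx : x ∈ ball x₀ r)
    (hz : ‖z - x‖ = r/2) (hρ : ρ ≤ r/4) (hw : w ∈ ball z ρ) (hlam : lam ∈ Set.Ioc (0:ℝ) 1) :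
    x + lam • (w - x) ∈ ball x₀ (2*r) := by
  rw [mem_ball, dist_eq_norm] at hx hw ⊢
  have hwx : ‖w - x‖ ≤ ρ + r/2 := by
    calc ‖w - x‖ ≤ ‖w - z‖ + ‖z - x‖ := norm_sub_le_norm_sub_add_norm_sub _ _ _
      _ ≤ ρ + r/2 := by rw [hz]; exact add_le_add hw.le le_rfl
  have h1 : x + lam • (w - x) - x₀ = (x - x₀) + lam • (w - x) := by abel
  rw [h1]
  calc ‖(x - x₀) + lam • (w - x)‖ ≤ ‖x - x₀‖ + ‖lam • (w - x)‖ := norm_add_le _ _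
    _ = ‖x - x₀‖ + lam * ‖w - x‖ := by
        rw [norm_smul, Real.norm_eq_abs, abs_of_pos hlam.1]
    _ ≤ ‖x - x₀‖ + 1 * ‖w - x‖ := by
        gcongr
        exact hlam.2
    _ < 2 * r := by rw [one_mul]; linarith
  
lemma geom (hn : 2 ≤ n) {Ω : Set E} (hΩo : IsOpen Ω)
    {α β K : ℝ} (hα : 0 < α) (hβ : 0 < β)
    (hgr : ∀ x_b ∈ frontier Ω, IsCkGraphAt n 1 Ω α β K x_b)
    {x₀ : E} (hx₀ : x₀ ∈ Ω) {r : ℝ} (hr : 0 < r)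
    (hr₀ : r ≤ min (α/4) (β/(4*(1+max K 0))))
    (hdist : infDist x₀ (frontier Ω) < r)
    {x : E} (hx : x ∈ ball x₀ r ∩ Ω) :
    ∃ z : E, ‖z - x‖ = r/2 ∧
      ∀ lam ∈ Set.Ioc (0:ℝ) 1, ∀ w ∈ ball z (r/(8*(1+max K 0))),
        x + lam • (w - x) ∈ Ω ∩ (ball x₀ (2*r) ∩ Ω) := by
  set K' := max K 0 with hK'def
  have hK'0 : 0 ≤ K' := le_max_right _ _
  have h1K : (0:ℝ) < 1 + K' := by linarith
  set ρ : ℝ := r/(8*(1+K')) with hρdef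
  have hρ0 : 0 < ρ := by positivity
  have hρr : ρ ≤ r/8 := by
    rw [hρdef, div_le_div_iff₀ (by positivity) (by norm_num)]
    nlinarith
  have hρr4 : ρ ≤ r/4 := by linarith
  by_cases hfr : frontier Ω = ∅
  · -- Ω is the whole space
    have hcl : IsClopen Ω := isClopen_iff_frontier_eq_empty.2 hfr
    have huniv : Ω = univ := by
      rcases isClopen_iff.1 hcl with h | h
      · exact absurd (h ▸ hx₀) (notMem_empty x₀)
      · exact h
    have hnz : NeZero n := ⟨by omega⟩
    set ν : E := EuclideanSpace.single (0 : Fin n) (1:ℝ) with hνdef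
    have hν1 : ‖ν‖ = 1 := by rw [hνdef, EuclideanSpace.norm_single]; norm_num
    refine ⟨x + (r/2) • ν, ?_, ?_⟩
    · rw [add_sub_cancel_left, norm_smul, Real.norm_eq_abs, abs_of_pos (by positivity), hν1]
      ring
    · intro lam hlam w hw
      refine ⟨huniv ▸ mem_univ _, ?_, huniv ▸ mem_univ _⟩
      exact ball_part hr hx.1 (by
        rw [add_sub_cancel_left, norm_smul, Real.norm_eq_abs, abs_of_pos (by positivity), hν1]
        ring) hρr4 hw hlam
  · -- boundary chart case
    obtain ⟨x_b, hx_bf, hx_bd⟩ :=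
      (infDist_lt_iff (Set.nonempty_iff_ne_empty.2 hfr)).1 hdist
    obtain ⟨e, h, hcont, h0, hd0, hK, hmem⟩ := hgr x_b hx_bf
    set eq2 := WithLp.equiv 2 (E' × ℝ) with heq2
    set co : E → (E' × ℝ) := fun u => eq2 (e u) with hco
    have hco_add : ∀ u v : E, co (u+v) = co u + co v := by
      intro u v; rw [hco]; simp only [map_add]; rfl
    have hco_smul : ∀ (a:ℝ) (u : E), co (a•u) = a • co u := by
      intro a u; rw [hco]; simp only [LinearIsometryEquiv.map_smul]; rfl
    have hco_norm1 : ∀ u : E, ‖(co u).1‖ ≤ ‖u‖ := by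
      intro u
      have h1 : ‖e u‖ = Real.sqrt (‖(e u).fst‖^2 + ‖(e u).snd‖^2) :=
        WithLp.prod_norm_eq_of_L2 _
      have h2 : ‖(co u).1‖ = ‖(e u).fst‖ := rfl
      rw [h2, ← e.norm_map u, h1]
      calc ‖(e u).fst‖ = Real.sqrt (‖(e u).fst‖^2) := by
            rw [Real.sqrt_sq (norm_nonneg _)]
        _ ≤ Real.sqrt (‖(e u).fst‖^2 + ‖(e u).snd‖^2) := by
            apply Real.sqrt_le_sqrt; nlinarith [sq_nonneg ‖(e u).snd‖]
    have hco_norm2 : ∀ u : E, |(co u).2| ≤ ‖u‖ := by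
      intro u
      have h1 : ‖e u‖ = Real.sqrt (‖(e u).fst‖^2 + ‖(e u).snd‖^2) :=
        WithLp.prod_norm_eq_of_L2 _
      have h2 : |(co u).2| = ‖(e u).snd‖ := rfl
      rw [h2, ← e.norm_map u, h1]
      calc ‖(e u).snd‖ = Real.sqrt (‖(e u).snd‖^2) := by
            rw [Real.sqrt_sq (norm_nonneg _)]
        _ ≤ Real.sqrt (‖(e u).fst‖^2 + ‖(e u).snd‖^2) := by
            apply Real.sqrt_le_sqrt; nlinarith [sq_nonneg ‖(e u).fst‖]
    set ν : E := e.symm (eq2.symm ((0 : E'), (1:ℝ))) with hνdef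
    have hco_ν : co ν = ((0 : E'), (1:ℝ)) := by
      show eq2 (e (e.symm (eq2.symm ((0 : E'), (1:ℝ))))) = ((0 : E'), (1:ℝ))
      rw [e.apply_symm_apply, Equiv.apply_symm_apply]
    have hν1 : ‖ν‖ = 1 := by
      rw [hνdef, e.symm.norm_map]
      rw [WithLp.prod_norm_eq_of_L2]
      simp only [heq2, WithLp.equiv_symm_apply, WithLp.toLp_fst, WithLp.toLp_snd]
      simp
    -- membership criterion
    have hmem' : ∀ u : E, ‖(co u).1‖ < α → |(co u).2 - h (co u).1| < β →
        (x_b + u ∈ Ω ↔ 0 < (co u).2 - h (co u).1) := by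
      intro u h1 h2
      have h3 := hmem (co u).1 ((co u).2 - h (co u).1) h1 h2
      have h4 : x_b + e.symm (eq2.symm ((co u).1, h (co u).1 + ((co u).2 - h (co u).1)))
          = x_b + u := by
        have h5 : ((co u).1, h (co u).1 + ((co u).2 - h (co u).1)) = co u := by
          rw [add_sub_cancel]
        rw [h5, hco, Equiv.symm_apply_apply, e.symm_apply_apply]
      rw [← h4]
      exact h3
    -- Lipschitz bound on h
    have hball_conv : Convex ℝ (ball (0:E') α) := convex_ball _ _
    have hdiff : DifferentiableOn ℝ h (ball (0:E') α) :=
      hcont.differentiableOn (by norm_num)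
    have hfd : ∀ y' ∈ ball (0:E') α, ‖fderivWithin ℝ h (ball 0 α) y'‖ ≤ K' := by
      intro y hy
      refine ContinuousLinearMap.opNorm_le_bound _ hK'0 (fun v => ?_)
      have huniq : UniqueDiffWithinAt ℝ (ball (0:E') α) y := isOpen_ball.uniqueDiffWithinAt hy
      have h1 : fderivWithin ℝ h (ball 0 α) y v
          = iteratedFDerivWithin ℝ 1 h (ball 0 α) y (fun _ => v) :=
        (iteratedFDerivWithin_one_apply huniq (fun _ => v)).symm
      rw [h1]
      calc ‖iteratedFDerivWithin ℝ 1 h (ball 0 α) y (fun _ => v)‖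
          ≤ ‖iteratedFDerivWithin ℝ 1 h (ball 0 α) y‖ * ∏ _i : Fin 1, ‖v‖ :=
            ContinuousMultilinearMap.le_opNorm _ _
        _ ≤ K' * ‖v‖ := by
            simp only [Finset.prod_const, Finset.card_univ, Fintype.card_fin, pow_one]
            exact mul_le_mul_of_nonneg_right ((hK 1 le_rfl y hy).trans (le_max_left _ _))
              (norm_nonneg v)
    have hlip : ∀ a ∈ ball (0:E') α, ∀ b ∈ ball (0:E') α, |h b - h a| ≤ K' * ‖b - a‖ := by
      intro a ha b hb
      have := hball_conv.norm_image_sub_le_of_norm_fderivWithin_le hdiff hfd ha hb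
      simpa [Real.norm_eq_abs] using this
    have habs : ∀ a ∈ ball (0:E') α, |h a| ≤ K' * ‖a‖ := by
      intro a ha
      have h0mem : (0:E') ∈ ball (0:E') α := by simp [hα]
      have := hlip 0 h0mem a ha
      simpa [h0] using this
    -- size constraints
    have hrα : r ≤ α/4 := (le_min_iff.1 hr₀).1
    have hrβ : r ≤ β/(4*(1+K')) := (le_min_iff.1 hr₀).2
    have hα3 : 3 * r < α := by linarith
    have hβ4 : 4 * (1+K') * r ≤ β := by
      rw [le_div_iff₀ (by positivity)] at hrβ
      linarith
    have hβ3 : 3 * r * (1+K') < β := by nlinarith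
    -- chart criterion for vectors of norm ≤ 3r
    have hchart : ∀ u : E, ‖u‖ ≤ 3*r → (x_b + u ∈ Ω ↔ 0 < (co u).2 - h (co u).1) := by
      intro u hu
      have hy : ‖(co u).1‖ < α := lt_of_le_of_lt (le_trans (hco_norm1 u) hu) hα3
      apply hmem' u hy
      have h2 : |(co u).2| ≤ 3*r := le_trans (hco_norm2 u) hu
      have h3 : |h (co u).1| ≤ K' * ‖(co u).1‖ := habs _ (mem_ball_zero_iff.2 hy)
      have h4 : K' * ‖(co u).1‖ ≤ K' * (3*r) :=
        mul_le_mul_of_nonneg_left (le_trans (hco_norm1 u) hu) hK'0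
      calc |(co u).2 - h (co u).1| ≤ |(co u).2| + |h (co u).1| := abs_sub _ _
        _ ≤ 3*r + K'*(3*r) := by linarith
        _ < β := by nlinarith
    -- x is in the chart with positive height
    have hxvec : ‖x - x_b‖ < 2*r := by
      have h1 : dist x x₀ < r := mem_ball.1 hx.1
      calc ‖x - x_b‖ = dist x x_b := (dist_eq_norm _ _).symm
        _ ≤ dist x x₀ + dist x₀ x_b := dist_triangle _ _ _
        _ < 2*r := by linarith
    have htx : 0 < (co (x - x_b)).2 - h ((co (x - x_b)).1) := by
      have h1 := hchart (x - x_b) (by linarith)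
      rw [add_sub_cancel] at h1
      exact h1.1 hx.2
    refine ⟨x + (r/2) • ν, ?_, ?_⟩
    · rw [add_sub_cancel_left, norm_smul, Real.norm_eq_abs, abs_of_pos (by positivity), hν1]
      ring
    · intro lam hlam w hw
      have hball := ball_part hr hx.1 (by
        rw [add_sub_cancel_left, norm_smul, Real.norm_eq_abs, abs_of_pos (by positivity), hν1]
        ring) hρr4 hw hlam
      set u2 := w - (x + (r/2) • ν) with hu2def
      have hu2 : ‖u2‖ < ρ := by
        rw [hu2def]
        exact mem_ball_iff_norm.1 hw
      set qv := (x - x_b) + lam • ((r/2) • ν + u2) with hqvdef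
      have hq_pt : x + lam • (w - x) = x_b + qv := by
        rw [hqvdef, hu2def]
        module
      have hqnorm : ‖qv‖ ≤ 3*r := by
        have h1 : ‖(r/2) • ν + u2‖ ≤ r/2 + ρ := by
          calc ‖(r/2) • ν + u2‖ ≤ ‖(r/2) • ν‖ + ‖u2‖ := norm_add_le _ _
            _ ≤ r/2 + ρ := by
                rw [norm_smul, Real.norm_eq_abs, abs_of_pos (by positivity), hν1, mul_one]
                linarith
        calc ‖qv‖ ≤ ‖x - x_b‖ + ‖lam • ((r/2) • ν + u2)‖ := norm_add_le _ _
          _ ≤ ‖x - x_b‖ + 1 * (r/2 + ρ) := by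
              rw [norm_smul, Real.norm_eq_abs, abs_of_pos hlam.1]
              exact add_le_add le_rfl (mul_le_mul hlam.2 h1 (norm_nonneg _) zero_le_one)
          _ ≤ 3*r := by linarith
      have hcoq : co qv = co (x - x_b) + lam • ((r/2) • ((0:E'),(1:ℝ)) + co u2) := by
        rw [hqvdef, hco_add, hco_smul, hco_add, hco_smul, hco_ν]
      have hq1 : (co qv).1 = (co (x-x_b)).1 + lam • (co u2).1 := by
        rw [hcoq]
        simp [Prod.add_def, Prod.smul_def]
      have hq2 : (co qv).2 = (co (x-x_b)).2 + lam * (r/2 + (co u2).2) := by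
        rw [hcoq]
        simp [Prod.add_def, Prod.smul_def, smul_eq_mul]
      have hΩq : x_b + qv ∈ Ω ↔ 0 < (co qv).2 - h ((co qv).1) := hchart qv hqnorm
      have hy'x : ‖(co (x - x_b)).1‖ < α :=
        lt_of_le_of_lt (le_trans (hco_norm1 _) (by linarith)) hα3
      have hy'q : ‖(co qv).1‖ < α := lt_of_le_of_lt (le_trans (hco_norm1 _) hqnorm) hα3
      have hlh : |h ((co qv).1) - h ((co (x-x_b)).1)| ≤ K' * ‖(co qv).1 - (co (x-x_b)).1‖ :=
        hlip _ (mem_ball_zero_iff.2 hy'x) _ (mem_ball_zero_iff.2 hy'q)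
      have hdiff1 : ‖(co qv).1 - (co (x-x_b)).1‖ ≤ lam * ρ := by
        rw [hq1, add_sub_cancel_left, norm_smul, Real.norm_eq_abs, abs_of_pos hlam.1]
        exact mul_le_mul_of_nonneg_left (le_trans (hco_norm1 _) hu2.le) hlam.1.le
      have hu2c : -ρ ≤ (co u2).2 := by
        have := (abs_le.1 (le_trans (hco_norm2 u2) hu2.le)).1
        linarith
      have h5 : h ((co qv).1) ≤ h ((co (x-x_b)).1) + K' * (lam * ρ) := by
        have h6 := (abs_le.1 hlh).1
        have h7 := (abs_le.1 hlh).2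
        nlinarith [mul_le_mul_of_nonneg_left hdiff1 hK'0]
      have h6 : (1+K') * ρ = r/8 := by
        rw [hρdef]
        field_simp
      have htq : 0 < (co qv).2 - h ((co qv).1) := by
        rw [hq2]
        have h8 : lam * ((1+K') * ρ) ≤ lam * (r/8) := by rw [h6]
        nlinarith [hlam.1, hlam.2, hρ0, mul_le_mul_of_nonneg_left hu2c hlam.1.le]
      have hΩmem : x + lam • (w - x) ∈ Ω := by
        rw [hq_pt]
        exact hΩq.2 htq
      exact ⟨hΩmem, hball, hΩmem⟩




lemma rpow_inv_mul {X a : ℝ} (hX : 0 < X) : X⁻¹ * X ^ a = X ^ (a - 1) := by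
  rw [Real.rpow_sub hX, Real.rpow_one, div_eq_mul_inv, mul_comm]

lemma arith_final (n : ℕ) {p q c' v r Mf Mg cp : ℝ} (hpq : Real.HolderConjugate p q)
    (hc' : 0 < c') (hv : 0 < v) (hr : 0 < r) (hMf : 0 ≤ Mf) (hMg : 0 ≤ Mg) (hcp : 0 ≤ cp) :
    ((c'*r)^n*v)⁻¹ * (Mf * ((c'*r)^n*v)^((1:ℝ)/q) + r * (cp * Mg * (r^n * v)^((1:ℝ)/q)))
      ≤ ((c'^n * v) ^ (-(1:ℝ)/p) + cp * ((c'^n)⁻¹ * v ^ (-(1:ℝ)/p))) * r ^ (-(n:ℝ)/p)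
          * (Mf + r * Mg) := by
  have hq0 : 0 < q := hpq.symm.pos
  have hp0 : 0 < p := hpq.pos
  have hexp : (1:ℝ)/q - 1 = -(1/p) := by
    have h := hpq.inv_add_inv_eq_one
    rw [← one_div, ← one_div] at h
    linarith
  have hrn : (0:ℝ) < r^n := by positivity
  have hcn : (0:ℝ) < c'^n := by positivity
  have hrnp : (r^n : ℝ) ^ (-(1:ℝ)/p) = r ^ (-(n:ℝ)/p) := by
    rw [← Real.rpow_natCast r n, ← Real.rpow_mul hr.le]
    congr 1
    ring
  -- Term 1
  have hXpos : (0:ℝ) < (c'*r)^n*v := by positivity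
  have e1 : ((c'*r)^n*v)⁻¹ * ((c'*r)^n*v)^((1:ℝ)/q) = ((c'*r)^n*v)^(-(1:ℝ)/p) := by
    rw [rpow_inv_mul hXpos, hexp]; rw [neg_div, one_div]
  have e2 : ((c'*r)^n*v)^(-(1:ℝ)/p) = (c'^n * v) ^ (-(1:ℝ)/p) * r ^ (-(n:ℝ)/p) := by
    have h1 : (c'*r)^n*v = (c'^n*v) * r^n := by rw [mul_pow]; ring
    rw [h1, Real.mul_rpow (by positivity) hrn.le, hrnp]
  -- Term 2
  have e3 : ((c'*r)^n*v)⁻¹ * (r^n * v)^((1:ℝ)/q)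
      = (c'^n)⁻¹ * v ^ (-(1:ℝ)/p) * (r^n) ^ (-(1:ℝ)/p) := by
    have h1 : ((c'*r)^n*v)⁻¹ = (c'^n)⁻¹ * ((r^n)⁻¹ * v⁻¹) := by
      rw [mul_pow, mul_inv, mul_inv, mul_assoc]
    rw [h1, Real.mul_rpow hrn.le hv.le]
    have h2 : (r^n:ℝ)⁻¹ * (r^n)^((1:ℝ)/q) = (r^n) ^ (-(1:ℝ)/p) := by
      rw [rpow_inv_mul hrn, hexp]; rw [neg_div, one_div]
    have h3 : v⁻¹ * v^((1:ℝ)/q) = v ^ (-(1:ℝ)/p) := by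
      rw [rpow_inv_mul hv, hexp]; rw [neg_div, one_div]
    calc (c'^n)⁻¹ * ((r^n)⁻¹ * v⁻¹) * ((r^n)^((1:ℝ)/q) * v^((1:ℝ)/q))
        = (c'^n)⁻¹ * (((r^n:ℝ)⁻¹ * (r^n)^((1:ℝ)/q)) * (v⁻¹ * v^((1:ℝ)/q))) := by ring
      _ = (c'^n)⁻¹ * v ^ (-(1:ℝ)/p) * (r^n) ^ (-(1:ℝ)/p) := by rw [h2, h3]; ring
  have hW : (0:ℝ) ≤ r ^ (-(n:ℝ)/p) := (Real.rpow_pos_of_pos hr _).le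
  have hC1 : (0:ℝ) ≤ (c'^n * v) ^ (-(1:ℝ)/p) := (Real.rpow_pos_of_pos (by positivity) _).le
  have hC2 : (0:ℝ) ≤ cp * ((c'^n)⁻¹ * v ^ (-(1:ℝ)/p)) := by positivity
  have split : ((c'*r)^n*v)⁻¹ * (Mf * ((c'*r)^n*v)^((1:ℝ)/q) + r * (cp * Mg * (r^n * v)^((1:ℝ)/q)))
      = (c'^n * v) ^ (-(1:ℝ)/p) * r ^ (-(n:ℝ)/p) * Mf
        + cp * ((c'^n)⁻¹ * v ^ (-(1:ℝ)/p)) * r ^ (-(n:ℝ)/p) * (r * Mg) := by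
    have t1 : ((c'*r)^n*v)⁻¹ * (Mf * ((c'*r)^n*v)^((1:ℝ)/q))
        = (c'^n * v) ^ (-(1:ℝ)/p) * r ^ (-(n:ℝ)/p) * Mf := by
      rw [show ((c'*r)^n*v)⁻¹ * (Mf * ((c'*r)^n*v)^((1:ℝ)/q))
          = (((c'*r)^n*v)⁻¹ * ((c'*r)^n*v)^((1:ℝ)/q)) * Mf by ring, e1, e2]
    have t2 : ((c'*r)^n*v)⁻¹ * (r * (cp * Mg * (r^n * v)^((1:ℝ)/q)))
        = cp * ((c'^n)⁻¹ * v ^ (-(1:ℝ)/p)) * r ^ (-(n:ℝ)/p) * (r * Mg) := by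
      rw [show ((c'*r)^n*v)⁻¹ * (r * (cp * Mg * (r^n * v)^((1:ℝ)/q)))
          = (((c'*r)^n*v)⁻¹ * (r^n * v)^((1:ℝ)/q)) * cp * (r * Mg) by ring, e3, hrnp]
      ring
    rw [mul_add, t1, t2]
  rw [split]
  nlinarith [mul_nonneg (mul_nonneg hC1 hW) (mul_nonneg hr.le hMg),
    mul_nonneg (mul_nonneg hC2 hW) hMf]

end Helpers

/-- Proposition A.1: boundary interpolation inequality on a uniformly
`C¹` domain for `p > n`: there are `r₀, C` such that for `x₀ ∈ Ω`, `0 < r ≤ r₀` with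
`d_Ω(x₀) < r`,
`‖φ‖_{L^∞(Ω_{x₀,r})} ≤ C r^{-n/p}(‖φ‖_{L^p(Ω_{x₀,2r})} + r‖∇φ‖_{L^p(Ω_{x₀,2r})})`. -/
theorem stmt9 (n : ℕ) (hn : 2 ≤ n) (Ω : Set (EuclideanSpace ℝ (Fin n)))
    (hΩ : IsUniformlyCkDomain n 1 Ω) (p : ℝ) (hp : (n : ℝ) < p) :
    ∃ r₀ > (0:ℝ), ∃ C > (0:ℝ), ∀ x₀ ∈ Ω, ∀ r : ℝ, 0 < r → r ≤ r₀ →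
      infDist x₀ (frontier Ω) < r →
      ∀ φ : EuclideanSpace ℝ (Fin n) → ℝ, DifferentiableOn ℝ φ Ω →
      MemLp φ (ENNReal.ofReal p) (volume.restrict (ball x₀ (2*r) ∩ Ω)) →
      MemLp (fun x => fderivWithin ℝ φ Ω x) (ENNReal.ofReal p)
        (volume.restrict (ball x₀ (2*r) ∩ Ω)) →
      ∀ x ∈ ball x₀ r ∩ Ω,
        |φ x| ≤ C * r ^ (-(n : ℝ) / p) *
          ((eLpNorm φ (ENNReal.ofReal p) (volume.restrict (ball x₀ (2*r) ∩ Ω))).toReal +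
            r * (eLpNorm (fun x => fderivWithin ℝ φ Ω x) (ENNReal.ofReal p)
              (volume.restrict (ball x₀ (2*r) ∩ Ω))).toReal) := by
  obtain ⟨hΩo, hΩc, α, hα, β, hβ, K, hgr⟩ := hΩ
  have hn' : (2:ℝ) ≤ (n:ℝ) := by exact_mod_cast hn
  have hp1 : 1 < p := by linarith
  have hp0 : 0 < p := by linarith
  set K' := max K 0 with hK'def
  have hK'0 : 0 ≤ K' := le_max_right _ _
  have h1K : (0:ℝ) < 1 + K' := by linarith
  set q := Real.conjExponent p with hqdef
  have hpq : p.HolderConjugate q := Real.HolderConjugate.conjExponent hp1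
  haveI hne : Nonempty (Fin n) := ⟨⟨0, by omega⟩⟩
  set v := (volume (ball (0:EuclideanSpace ℝ (Fin n)) 1)).toReal with hvdef
  have hv : 0 < v :=
    ENNReal.toReal_pos (measure_ball_pos _ _ one_pos).ne' measure_ball_lt_top.ne
  set c' : ℝ := 1/(8*(1+K')) with hc'def
  have hc'0 : 0 < c' := by positivity
  set cp := p/(p - (n:ℝ)) with hcpdef
  have hcp : 0 < cp := div_pos hp0 (by linarith)
  set C1 := (c'^n * v) ^ (-(1:ℝ)/p) with hC1def
  set C2 := cp * ((c'^n)⁻¹ * v ^ (-(1:ℝ)/p)) with hC2def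
  have hC1p : 0 < C1 := Real.rpow_pos_of_pos (by positivity) _
  have hC2p : 0 < C2 := by
    apply mul_pos hcp
    exact mul_pos (by positivity) (Real.rpow_pos_of_pos hv _)
  refine ⟨min (α/4) (β/(4*(1+K'))), by positivity, C1 + C2, by linarith, ?_⟩
  intro x₀ hx₀ r hr hrr₀ hdist φ hφ hMf hMg x hX
  set A := ball x₀ (2*r) ∩ Ω with hAdef
  have hAmeas : MeasurableSet A := measurableSet_ball.inter hΩo.measurableSet
  have hAfin : volume A ≠ ⊤ :=
    ((measure_mono Set.inter_subset_left).trans_lt measure_ball_lt_top).ne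
  obtain ⟨z, hz, hcone⟩ := geom hn hΩo hα hβ hgr hx₀ hr hrr₀ hdist hX
  set ρ := r/(8*(1+K')) with hρdef
  have hρ0 : 0 < ρ := by positivity
  have hρc : ρ = c' * r := by rw [hρdef, hc'def]; ring
  have hρ8 : ρ ≤ r/8 := by
    rw [hρdef, div_le_div_iff₀ (by positivity) (by norm_num)]
    nlinarith
  have hder : ∀ y ∈ Ω, HasFDerivAt φ (fderivWithin ℝ φ Ω y) y := by
    intro y hy
    have hdy : DifferentiableAt ℝ φ y := (hφ y hy).differentiableAt (hΩo.mem_nhds hy)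
    rw [fderivWithin_of_isOpen hΩo hy]
    exact hdy.hasFDerivAt
  have hzR : ‖z - x‖ + ρ ≤ r := by rw [hz]; linarith
  have hcore := core_bound hn hpq hp hΩo hAmeas hAfin hder hMf hMg hρ0 hzR hX.2 hcone
  have hVB : (volume (ball z ρ)).toReal = (c'*r)^n * v := by
    rw [Measure.addHaar_ball volume z hρ0.le, finrank_euclideanSpace_fin,
      ENNReal.toReal_mul, ENNReal.toReal_ofReal (by positivity), ← hρc, hvdef]
  rw [hVB] at hcore
  refine le_trans hcore ?_
  exact arith_final (p := p) (q := q) n hpq hc'0 hv hr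
    (ENNReal.toReal_nonneg) (ENNReal.toReal_nonneg) hcp.le
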